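/- Let D be the doubling D ⊕ Da inside a composition algebra as above, where D is commutative. Then for all x ∈ Da and u, v ∈ D one has u(vx) = (uv)x and (xu)v = x(uv); i.e., Da is a D-bimodule. Conversely, if these associativity relations hold for all such elements, D is commutative. -/

import Mathlib

open QuadraticMap

/-- A composition algebra structure on `V` over `F`: a (not necessarily associative)
unital bilinear multiplication together with a multiplicative quadratic form whose
polar bilinear form is nondegenerate. -/
structure CompAlg (F : Type*) [Field F] (V : Type*) [AddCommGroup V] [Module F V] where
  Q : QuadraticForm F V
  mul : V → V → V
  one : V
  mul_add_left : ∀ x y z : V, mul (x + y) z = mul x z + mul y z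
  mul_add_right : ∀ x y z : V, mul x (y + z) = mul x y + mul x z
  mul_smul_left : ∀ (a : F) (x y : V), mul (a • x) y = a • mul x y
  mul_smul_right : ∀ (a : F) (x y : V), mul x (a • y) = a • mul x y
  one_mul : ∀ x : V, mul one x = x
  mul_one : ∀ x : V, mul x one = x
  norm_mul : ∀ x y : V, Q (mul x y) = Q x * Q y
  nondeg : ∀ x : V, (∀ y : V, polar (⇑Q) y x = 0) → x = 0

namespace CompAlg

variable {F : Type*} [Field F] {V : Type*} [AddCommGroup V] [Module F V]

/-- The associated bilinear form `f(x,y) = Q(x+y) - Q(x) - Q(y)`. -/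
def f (A : CompAlg F V) (x y : V) : F := A.Q (x + y) - A.Q x - A.Q y

/-- Conjugation `x̄ = f(x,1)·1 - x`. -/
def conj (A : CompAlg F V) (x : V) : V := A.f x A.one • A.one - x

end CompAlg

namespace CompAlg

variable {F : Type*} [Field F] {V : Type*} [AddCommGroup V] [Module F V]
variable (A : CompAlg F V)

lemma f_polar (x y : V) : A.f x y = polar ⇑A.Q x y := rfl

lemma f_comm (x y : V) : A.f x y = A.f y x := by
  rw [f_polar, f_polar, polar_comm]

lemma f_add_left (x y z : V) : A.f (x + y) z = A.f x z + A.f y z := by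
  rw [f_polar, f_polar, f_polar]; exact polar_add_left A.Q x y z

lemma f_smul_left (c : F) (x y : V) : A.f (c • x) y = c * A.f x y := by
  rw [f_polar, f_polar, ← smul_eq_mul]; exact polar_smul_left A.Q c x y

lemma f_add_right (x y z : V) : A.f x (y + z) = A.f x y + A.f x z := by
  rw [A.f_comm, A.f_add_left, A.f_comm y x, A.f_comm z x]

lemma f_smul_right (c : F) (x y : V) : A.f x (c • y) = c * A.f x y := by
  rw [A.f_comm, A.f_smul_left, A.f_comm y x]

lemma f_neg_right (x y : V) : A.f x (-y) = -A.f x y := by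
  rw [show (-y) = (-1 : F) • y by rw [neg_one_smul], A.f_smul_right]; ring

lemma f_neg_left (x y : V) : A.f (-x) y = -A.f x y := by
  rw [A.f_comm, A.f_neg_right, A.f_comm y x]

lemma f_sub_right (x y z : V) : A.f x (y - z) = A.f x y - A.f x z := by
  rw [sub_eq_add_neg, A.f_add_right, A.f_neg_right, sub_eq_add_neg]

lemma f_sub_left (x y z : V) : A.f (x - y) z = A.f x z - A.f y z := by
  rw [sub_eq_add_neg, A.f_add_left, A.f_neg_left, sub_eq_add_neg]

lemma f_zero_right (x : V) : A.f x 0 = 0 := by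
  have := A.f_smul_right 0 x 0
  simpa using this

lemma f_zero_left (x : V) : A.f 0 x = 0 := by
  rw [A.f_comm, A.f_zero_right]

lemma f_self (x : V) : A.f x x = 2 * A.Q x := by
  simp only [f]
  rw [show x + x = (2 : F) • x from (two_smul F x).symm, QuadraticMap.map_smul,
    smul_eq_mul]
  ring

lemma neg_mul' (x y : V) : A.mul (-x) y = -A.mul x y := by
  rw [← neg_one_smul F x, A.mul_smul_left, neg_one_smul]

lemma mul_neg' (x y : V) : A.mul x (-y) = -A.mul x y := by
  rw [← neg_one_smul F y, A.mul_smul_right, neg_one_smul]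

lemma sub_mul' (x y z : V) : A.mul (x - y) z = A.mul x z - A.mul y z := by
  rw [sub_eq_add_neg, A.mul_add_left, A.neg_mul', sub_eq_add_neg]

lemma mul_sub' (x y z : V) : A.mul x (y - z) = A.mul x y - A.mul x z := by
  rw [sub_eq_add_neg, A.mul_add_right, A.mul_neg', sub_eq_add_neg]

lemma lin1L (x y w : V) : A.f (A.mul x y) (A.mul x w) = A.Q x * A.f y w := by
  have h := A.norm_mul x (y + w)
  rw [A.mul_add_right] at h
  simp only [f]
  rw [h, A.norm_mul, A.norm_mul]
  ring

lemma lin1R (x y w : V) : A.f (A.mul y x) (A.mul w x) = A.Q x * A.f y w := by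
  have h := A.norm_mul (y + w) x
  rw [A.mul_add_left] at h
  simp only [f]
  rw [h, A.norm_mul, A.norm_mul]
  ring

lemma lin2 (x y z w : V) :
    A.f (A.mul x y) (A.mul z w) + A.f (A.mul z y) (A.mul x w) = A.f x z * A.f y w := by
  have h := A.lin1L (x + z) y w
  rw [A.mul_add_left, A.mul_add_left, A.f_add_left, A.f_add_right, A.f_add_right,
    A.lin1L, A.lin1L] at h
  have hq : A.Q (x + z) = A.Q x + A.Q z + A.f x z := by
    simp only [f]; ring
  rw [hq] at h
  linear_combination h

lemma flip1 (x y z : V) : A.f (A.mul x y) z = A.f y (A.mul (A.conj x) z) := by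
  have h := A.lin2 x y A.one z
  rw [A.one_mul, A.one_mul] at h
  simp only [conj]
  rw [A.sub_mul', A.mul_smul_left, A.one_mul, A.f_sub_right, A.f_smul_right]
  linear_combination h

lemma flip2 (x y z : V) : A.f (A.mul x y) z = A.f x (A.mul z (A.conj y)) := by
  have h := A.lin2 x y z A.one
  rw [A.mul_one, A.mul_one] at h
  simp only [conj]
  rw [A.mul_sub', A.mul_smul_right, A.mul_one, A.f_sub_right, A.f_smul_right]
  have hc2 := A.f_comm (A.mul z y) x
  linear_combination h - hc2

lemma Q_one (w : V) (hw : A.Q w ≠ 0) : A.Q A.one = 1 := by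
  by_contra h
  have hf : ∀ x y : V, A.f x y = 0 := by
    intro x y
    have h1 := A.lin1L A.one x y
    rw [A.one_mul, A.one_mul] at h1
    have h2 : (1 - A.Q A.one) * A.f x y = 0 := by
      linear_combination h1
    rcases mul_eq_zero.mp h2 with h' | h'
    · exact absurd (by linear_combination -h' : A.Q A.one = 1) h
    · exact h'
  have hw0 : w = 0 := A.nondeg w (fun y => by rw [← A.f_polar]; exact hf y w)
  rw [hw0] at hw
  exact hw (QuadraticMap.map_zero A.Q)

lemma conj_conj (hQe : A.Q A.one = 1) (x : V) : A.conj (A.conj x) = x := by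
  have he : A.f A.one A.one = 2 := by rw [A.f_self, hQe, _root_.mul_one]
  simp only [conj]
  rw [A.f_sub_left, A.f_smul_left, he]
  rw [show A.f x A.one * 2 - A.f x A.one = A.f x A.one by ring]
  abel

lemma key5L (x y : V) : A.mul (A.conj x) (A.mul x y) = A.Q x • y := by
  rw [← sub_eq_zero]
  apply A.nondeg
  intro w
  rw [← A.f_polar, A.f_sub_right, A.f_smul_right]
  rw [show A.f w (A.mul (A.conj x) (A.mul x y)) = A.f (A.mul x w) (A.mul x y) from
    (A.flip1 x w _).symm]
  rw [A.lin1L]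
  ring

lemma key5R (hQe : A.Q A.one = 1) (x y : V) :
    A.mul (A.mul y x) (A.conj x) = A.Q x • y := by
  rw [← sub_eq_zero]
  apply A.nondeg
  intro w
  rw [← A.f_polar, A.f_sub_right, A.f_smul_right]
  have e1 : A.f w (A.mul (A.mul y x) (A.conj x)) = A.f (A.mul y x) (A.mul w x) := by
    rw [A.f_comm, A.flip2, A.conj_conj hQe]
  rw [e1, A.lin1R, A.f_comm w y]
  ring

lemma lin5L (x z y : V) :
    A.mul (A.conj x) (A.mul z y) + A.mul (A.conj z) (A.mul x y) = A.f x z • y := by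
  rw [← sub_eq_zero]
  apply A.nondeg
  intro w
  rw [← A.f_polar, A.f_sub_right, A.f_add_right, A.f_smul_right]
  rw [show A.f w (A.mul (A.conj x) (A.mul z y)) = A.f (A.mul x w) (A.mul z y) from
    (A.flip1 x w _).symm]
  rw [show A.f w (A.mul (A.conj z) (A.mul x y)) = A.f (A.mul z w) (A.mul x y) from
    (A.flip1 z w _).symm]
  have h := A.lin2 x w z y
  have hc := A.f_comm w y
  linear_combination h

lemma lin5R (hQe : A.Q A.one = 1) (x z y : V) :
    A.mul (A.mul y z) (A.conj x) + A.mul (A.mul y x) (A.conj z) = A.f x z • y := by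
  rw [← sub_eq_zero]
  apply A.nondeg
  intro w
  rw [← A.f_polar, A.f_sub_right, A.f_add_right, A.f_smul_right]
  have e1 : A.f w (A.mul (A.mul y z) (A.conj x)) = A.f (A.mul y z) (A.mul w x) := by
    rw [A.f_comm, A.flip2, A.conj_conj hQe]
  have e2 : A.f w (A.mul (A.mul y x) (A.conj z)) = A.f (A.mul y x) (A.mul w z) := by
    rw [A.f_comm, A.flip2, A.conj_conj hQe]
  rw [e1, e2]
  have h := A.lin2 y z w x
  rw [A.f_comm y w, A.f_comm z x] at h
  have c1 := A.f_comm (A.mul w z) (A.mul y x)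
  linear_combination h - c1

lemma f_conj_right (p q : V) :
    A.f p (A.conj q) = A.f q A.one * A.f p A.one - A.f p q := by
  simp only [conj]
  rw [A.f_sub_right, A.f_smul_right]

lemma conj_mul (x y : V) : A.conj (A.mul x y) = A.mul (A.conj y) (A.conj x) := by
  rw [← sub_eq_zero]
  apply A.nondeg
  intro w
  rw [← A.f_polar, A.f_sub_right]
  have h1 : A.f (A.mul x y) A.one = A.f x A.one * A.f y A.one - A.f y x := by
    rw [A.flip1, A.mul_one, A.f_conj_right]
  have h2 : A.f (A.mul y w) A.one = A.f y A.one * A.f w A.one - A.f w y := by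
    rw [A.flip1, A.mul_one, A.f_conj_right]
  have h3 : A.f (A.mul x w) y = A.f x A.one * A.f w y - A.f w (A.mul x y) := by
    rw [show A.f (A.mul x w) y = A.f w (A.mul (A.conj x) y) from A.flip1 x w y]
    simp only [conj]
    rw [A.sub_mul', A.mul_smul_left, A.one_mul, A.f_sub_right, A.f_smul_right]
  have h4 := A.lin2 y w x A.one
  rw [A.mul_one, A.mul_one] at h4
  have h5 : A.f w (A.mul (A.conj y) (A.conj x)) = A.f (A.mul y w) (A.conj x) :=
    (A.flip1 y w (A.conj x)).symm
  rw [A.f_conj_right w (A.mul x y), h5, A.f_conj_right (A.mul y w) x, h1, h2]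
  have h4' : A.f (A.mul y w) x = A.f y x * A.f w A.one - A.f (A.mul x w) y := by
    linear_combination h4
  rw [h4', h3, A.f_comm y x]
  ring

end CompAlg

/-- in the doubling `D ⊕ Da`, the elements of `Da` satisfy the bimodule
associativity relations `u(vx) = (uv)x` and `(xu)v = x(uv)` (for `u, v ∈ D`, `x ∈ Da`)
if and only if `D` is commutative. -/
theorem stmt3 {F : Type*} [Field F] {V : Type*} [AddCommGroup V] [Module F V]
    (A : CompAlg F V) (h2 : (2 : F) ≠ 0)
    (D : Submodule F V) (hD1 : A.one ∈ D)
    (hDmul : ∀ x ∈ D, ∀ y ∈ D, A.mul x y ∈ D)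
    (hDnd : ∀ x ∈ D, (∀ y ∈ D, A.f y x = 0) → x = 0)
    (hDfin : FiniteDimensional F D)
    (hDproper : D ≠ ⊤)
    (a : V) (ha : ∀ x ∈ D, A.f a x = 0) (hQa : A.Q a ≠ 0) :
    (∀ u ∈ D, ∀ v ∈ D, ∀ y ∈ D,
        A.mul u (A.mul v (A.mul y a)) = A.mul (A.mul u v) (A.mul y a) ∧
        A.mul (A.mul (A.mul y a) u) v = A.mul (A.mul y a) (A.mul u v))
      ↔ (∀ u ∈ D, ∀ v ∈ D, A.mul u v = A.mul v u) := by
  have hQe : A.Q A.one = 1 := A.Q_one a hQa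
  have hfe : A.f A.one A.one = 2 := by rw [A.f_self, hQe, _root_.mul_one]
  have hca : A.conj a = -a := by
    have h0 : A.f a A.one = 0 := ha A.one hD1
    simp only [CompAlg.conj]
    rw [h0, zero_smul, zero_sub]
  have hconjD : ∀ u ∈ D, A.conj u ∈ D := by
    intro u hu
    exact D.sub_mem (D.smul_mem _ hD1) hu
  have hfca : ∀ u ∈ D, A.f (A.conj u) a = 0 := by
    intro u hu
    simp only [CompAlg.conj]
    rw [A.f_sub_left, A.f_smul_left]
    have h1 : A.f A.one a = 0 := by rw [A.f_comm]; exact ha A.one hD1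
    have h2' : A.f u a = 0 := by rw [A.f_comm]; exact ha u hu
    rw [h1, h2']
    ring
  -- u · (a y) = a · (ū y)
  have aL : ∀ u ∈ D, ∀ y : V, A.mul u (A.mul a y) = A.mul a (A.mul (A.conj u) y) := by
    intro u hu y
    have h := A.lin5L (A.conj u) a y
    rw [A.conj_conj hQe, hca, hfca u hu, zero_smul, A.neg_mul'] at h
    rwa [add_neg_eq_zero] at h
  -- (y a) · u = (y ū) · a
  have aR : ∀ u ∈ D, ∀ y : V, A.mul (A.mul y a) u = A.mul (A.mul y (A.conj u)) a := by
    intro u hu y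
    have h := A.lin5R hQe (A.conj u) a y
    rw [A.conj_conj hQe, hca, hfca u hu, zero_smul, A.mul_neg'] at h
    rwa [add_neg_eq_zero] at h
  have ua : ∀ u ∈ D, A.mul u a = A.mul a (A.conj u) := by
    intro u hu
    have h := aL u hu A.one
    rwa [A.mul_one, A.mul_one] at h
  -- u · (v a) = (v u) · a
  have leftF : ∀ u ∈ D, ∀ v ∈ D, A.mul u (A.mul v a) = A.mul (A.mul v u) a := by
    intro u hu v hv
    rw [ua v hv, aL u hu, ← A.conj_mul v u, ← ua (A.mul v u) (hDmul v hv u hu)]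
  have inj : ∀ y y' : V, A.mul y a = A.mul y' a → y = y' := by
    intro y y' h
    have k1 := A.key5R hQe a y
    have k2 := A.key5R hQe a y'
    rw [h] at k1
    have h3 : A.Q a • y = A.Q a • y' := by rw [← k1, ← k2]
    exact smul_right_injective V hQa h3
  constructor
  · intro hrel u hu v hv
    have h := (hrel u hu v hv A.one hD1).1
    rw [A.one_mul] at h
    rw [leftF u hu v hv] at h
    exact (inj _ _ h).symm
  · intro hc u hu v hv y hy
    -- products of trace-zero elements are scalar
    have hD0mul : ∀ p ∈ D, ∀ q ∈ D, A.f p A.one = 0 → A.f q A.one = 0 →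
        A.mul p q = (-(A.f p q) / 2) • A.one := by
      intro p hp q hq hp0 hq0
      have hcp : A.conj p = -p := by
        simp only [CompAlg.conj]; rw [hp0, zero_smul, zero_sub]
      have hcq : A.conj q = -q := by
        simp only [CompAlg.conj]; rw [hq0, zero_smul, zero_sub]
      have h1 : A.conj (A.mul p q) = A.mul p q := by
        rw [A.conj_mul, hcp, hcq, A.neg_mul', A.mul_neg', neg_neg, hc q hq p hp]
      have hfpq : A.f (A.mul p q) A.one = -(A.f p q) := by
        rw [A.flip1, A.mul_one, hcp, A.f_neg_right, A.f_comm q p]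
      have h3 : A.mul p q + A.mul p q = (-(A.f p q)) • A.one := by
        have h1' := h1
        simp only [CompAlg.conj] at h1'
        rw [hfpq] at h1'
        exact (sub_eq_iff_eq_add.mp h1').symm
      have h4 : (2 : F) • A.mul p q = (-(A.f p q)) • A.one := by
        rw [two_smul]; exact h3
      calc A.mul p q = (2 : F)⁻¹ • ((2 : F) • A.mul p q) := by
            rw [smul_smul, inv_mul_cancel₀ h2, one_smul]
        _ = (2 : F)⁻¹ • ((-(A.f p q)) • A.one) := by rw [h4]
        _ = (-(A.f p q) / 2) • A.one := by
            rw [smul_smul, show (2 : F)⁻¹ * (-(A.f p q)) = -(A.f p q) / 2 by ring]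
    -- the key scalar relation f(p,q) p = 2Q(p) q
    have hR2 : ∀ p ∈ D, ∀ q ∈ D, A.f p A.one = 0 → A.f q A.one = 0 →
        A.f p q • p = (2 * A.Q p) • q := by
      intro p hp q hq hp0 hq0
      have hcp : A.conj p = -p := by
        simp only [CompAlg.conj]; rw [hp0, zero_smul, zero_sub]
      have k := A.key5L p q
      rw [hcp, A.neg_mul', hD0mul p hp q hq hp0 hq0, A.mul_smul_right, A.mul_one] at k
      -- k : -((-(f p q) / 2) • p) = Q p • q
      rw [← neg_smul, show -(-(A.f p q) / 2) = A.f p q / 2 by ring] at k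
      have k2 : (2 : F) • ((A.f p q / 2) • p) = (2 : F) • (A.Q p • q) := by rw [k]
      rw [smul_smul, smul_smul, show (2 : F) * (A.f p q / 2) = A.f p q by
        field_simp] at k2
      exact k2
    -- nonzero trace-zero elements are anisotropic
    have hAniso : ∀ q ∈ D, A.f q A.one = 0 → q ≠ 0 → A.f q q ≠ 0 := by
      intro q hq hq0 hqne hqq
      apply hqne
      apply hDnd q hq
      intro y hy
      have hy0iso : A.f (y - (A.f y A.one / 2) • A.one) A.one = 0 := by
        rw [A.f_sub_left, A.f_smul_left, hfe]
        field_simp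
        ring
      set y0 := y - (A.f y A.one / 2) • A.one with hy0def
      have hy0D : y0 ∈ D := D.sub_mem hy (D.smul_mem _ hD1)
      have hr := hR2 q hq y0 hy0D hq0 hy0iso
      have hQq : 2 * A.Q q = 0 := by rw [← A.f_self]; exact hqq
      rw [hQq, zero_smul] at hr
      have hfq : A.f q y0 = 0 := by
        rcases smul_eq_zero.mp hr with h | h
        · exact h
        · exact absurd h hqne
      have hfeq : A.f A.one q = 0 := by rw [A.f_comm]; exact hq0
      have hyy : y = y0 + (A.f y A.one / 2) • A.one := by rw [hy0def]; abel
      rw [hyy, A.f_add_left, A.f_smul_left, hfeq, A.f_comm y0 q, hfq]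
      ring
    -- f(p,q) r = f(q,r) p for trace-zero elements
    have hR4 : ∀ p ∈ D, ∀ q ∈ D, ∀ r ∈ D,
        A.f p A.one = 0 → A.f q A.one = 0 → A.f r A.one = 0 →
        A.f p q • r = A.f q r • p := by
      intro p hp q hq r hr hp0 hq0 hr0
      by_cases hqz : q = 0
      · subst hqz
        rw [A.f_zero_right, A.f_zero_left, zero_smul, zero_smul]
      · have hqq := hAniso q hq hq0 hqz
        apply smul_right_injective V hqq
        show A.f q q • (A.f p q • r) = A.f q q • (A.f q r • p)
        have e1 : A.f q q • r = A.f q r • q := by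
          have := hR2 q hq r hr hq0 hr0
          rw [← A.f_self] at this
          exact this.symm
        have e2 : A.f q q • p = A.f q p • q := by
          have := hR2 q hq p hp hq0 hp0
          rw [← A.f_self] at this
          exact this.symm
        calc A.f q q • (A.f p q • r) = A.f p q • (A.f q q • r) := by
              rw [smul_smul, smul_smul, mul_comm]
          _ = A.f p q • (A.f q r • q) := by rw [e1]
          _ = A.f q r • (A.f q p • q) := by
              rw [smul_smul, smul_smul, A.f_comm q p, mul_comm]
          _ = A.f q r • (A.f q q • p) := by rw [e2]
          _ = A.f q q • (A.f q r • p) := by rw [smul_smul, smul_smul, mul_comm]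
    -- associativity on trace-zero elements
    have assoc0 : ∀ p ∈ D, ∀ q ∈ D, ∀ r ∈ D,
        A.f p A.one = 0 → A.f q A.one = 0 → A.f r A.one = 0 →
        A.mul (A.mul p q) r = A.mul p (A.mul q r) := by
      intro p hp q hq r hr hp0 hq0 hr0
      rw [hD0mul p hp q hq hp0 hq0, hD0mul q hq r hr hq0 hr0,
        A.mul_smul_left, A.one_mul, A.mul_smul_right, A.mul_one]
      rw [show (-(A.f p q) / 2) = (-(2 : F)⁻¹) * A.f p q by ring,
        show (-(A.f q r) / 2) = (-(2 : F)⁻¹) * A.f q r by ring,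
        mul_smul, mul_smul, hR4 p hp q hq r hr hp0 hq0 hr0]
    -- full associativity on D
    have assocD : ∀ x ∈ D, ∀ y ∈ D, ∀ z ∈ D,
        A.mul (A.mul x y) z = A.mul x (A.mul y z) := by
      have hdec : ∀ x ∈ D, ∃ s : F, ∃ p : V, p ∈ D ∧ A.f p A.one = 0 ∧
          x = s • A.one + p := by
        intro x hx
        refine ⟨A.f x A.one / 2, x - (A.f x A.one / 2) • A.one,
          D.sub_mem hx (D.smul_mem _ hD1), ?_, by abel⟩
        rw [A.f_sub_left, A.f_smul_left, hfe]
        field_simp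
        ring
      intro x hx y hy z hz
      obtain ⟨s, p, hpD, hp0, hxd⟩ := hdec x hx
      obtain ⟨t, q, hqD, hq0, hyd⟩ := hdec y hy
      obtain ⟨w, r, hrD, hr0, hzd⟩ := hdec z hz
      rw [hxd, hyd, hzd]
      simp only [A.mul_add_left, A.mul_add_right, A.mul_smul_left, A.mul_smul_right,
        A.one_mul, A.mul_one, smul_add]
      rw [assoc0 p hpD q hqD r hrD hp0 hq0 hr0]
    refine ⟨?_, ?_⟩
    · rw [leftF v hv y hy, leftF u hu (A.mul y v) (hDmul y hy v hv),
        leftF (A.mul u v) (hDmul u hu v hv) y hy]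
      have hxy : A.mul (A.mul y v) u = A.mul y (A.mul u v) := by
        rw [assocD y hy v hv u hu, hc u hu v hv]
      rw [hxy]
    · rw [aR u hu y, aR v hv (A.mul y (A.conj u)),
        aR (A.mul u v) (hDmul u hu v hv) y, A.conj_mul u v]
      have hxy : A.mul (A.mul y (A.conj u)) (A.conj v) =
          A.mul y (A.mul (A.conj v) (A.conj u)) := by
        rw [assocD y hy (A.conj u) (hconjD u hu) (A.conj v) (hconjD v hv),
          hc (A.conj u) (hconjD u hu) (A.conj v) (hconjD v hv)]
      rw [hxy]
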